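/- arXiv:2410.09830 — 4 statements merged into one kernel-verified Lean document; each statement's English description precedes it below -/
import Mathlib

section
/- For every integer n ≥ 3, the multiset of eigenvalues of the adjacency matrix of the complement of the double star S̄_{n,n} (a graph on 2n vertices) consists of (−1+√(4n−3))/2, (−1−√(4n−3))/2, (2n−3+√(4n²−8n+5))/2, (2n−3−√(4n²−8n+5))/2, together with −1 with multiplicity 2n−4. Equivalently, the characteristic polynomial of the adjacency matrix of S̄_{n,n} equals (x² − (2n−3)x − (n−1))·(x² + x − (n−1))·(x+1)^{2n−4}. -/
open Polynomial

/-- Adjacency matrix of a simple graph over ℝ (using classical decidability). -/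
noncomputable def adjMat {V : Type*} [Fintype V] (G : SimpleGraph V) : Matrix V V ℝ :=
  letI := Classical.decRel G.Adj
  SimpleGraph.adjMatrix ℝ G

/-- The double star `S_{n,n}`: two stars `K_{1,n-1}` with centers `Sum.inl none` and
`Sum.inr none`, joined by an edge between the two centers. It has `2n` vertices when `n ≥ 1`. -/
def doubleStar (n : ℕ) : SimpleGraph (Option (Fin (n - 1)) ⊕ Option (Fin (n - 1))) :=
  SimpleGraph.fromRel (fun a b =>
    (a = Sum.inl none ∧ ∃ i, b = Sum.inl (some i)) ∨
    (a = Sum.inr none ∧ ∃ i, b = Sum.inr (some i)) ∨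
    (a = Sum.inl none ∧ b = Sum.inr none))

private lemma charpoly_mul_key {p q : Type} [Fintype p] [Fintype q] [DecidableEq p]
    [DecidableEq q] (A : Matrix p q ℝ) (B : Matrix q p ℝ) :
    (A * B).charpoly * X ^ (Fintype.card q) = (B * A).charpoly * X ^ (Fintype.card p) := by
  set F := FractionRing ℝ[X]
  set φ : ℝ[X] →+* F := algebraMap ℝ[X] F with hφ
  apply IsFractionRing.injective ℝ[X] F
  rw [← hφ]
  set x : F := φ X with hxdef
  have hx : x ≠ 0 := fun h =>
    X_ne_zero (R := ℝ) ((IsFractionRing.injective ℝ[X] F) (by rw [map_zero]; exact h))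
  set ψ : ℝ →+* F := φ.comp Polynomial.C with hψ
  have key : ∀ {r : Type} [Fintype r] [DecidableEq r] (M : Matrix r r ℝ),
      φ (M.charpoly) = ((x • (1 : Matrix r r F)) - M.map ψ).det := by
    intro r _ _ M
    rw [Matrix.charpoly, RingHom.map_det]
    congr 1
    ext i j
    by_cases h : i = j
    · subst h
      simp [Matrix.charmatrix_apply_eq, Matrix.sub_apply, Matrix.smul_apply,
        Matrix.one_apply_eq, Matrix.map_apply, hψ]
      exact hxdef.symm
    · simp [Matrix.charmatrix_apply_ne _ _ _ h, Matrix.sub_apply, Matrix.smul_apply,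
        Matrix.one_apply_ne h, Matrix.map_apply, hψ]
  have hAB : (A * B).map ⇑ψ = A.map ⇑ψ * B.map ⇑ψ := Matrix.map_mul
  have hBA : (B * A).map ⇑ψ = B.map ⇑ψ * A.map ⇑ψ := Matrix.map_mul
  set A' := A.map ⇑ψ
  set B' := B.map ⇑ψ
  have h1 : (x • (1 : Matrix p p F)) - A' * B' = x • ((1 : Matrix p p F) - (x⁻¹ • A') * B') := by
    rw [smul_sub]
    congr 1
    rw [← Matrix.smul_mul, smul_smul, mul_inv_cancel₀ hx, one_smul]
  have h2 : (x • (1 : Matrix q q F)) - B' * A' = x • ((1 : Matrix q q F) - B' * (x⁻¹ • A')) := by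
    rw [smul_sub]
    congr 1
    rw [Matrix.mul_smul, smul_smul, mul_inv_cancel₀ hx, one_smul]
  have k1 := key (r := p) (A * B)
  have k2 := key (r := q) (B * A)
  rw [_root_.map_mul, _root_.map_mul, map_pow, map_pow, k1, k2, hAB, hBA, h1, h2,
    Matrix.det_smul, Matrix.det_smul, Matrix.det_one_sub_mul_comm, ← hxdef]
  ring

private lemma charpoly_shift {p : Type} [Fintype p] [DecidableEq p] (M : Matrix p p ℝ) :
    M.charpoly = ((M + 1).charpoly).comp (X + 1) := by
  have h1 : ((M + 1).charpoly).comp (X + 1) = (eval₂RingHom C (X+1 : ℝ[X])) ((M+1).charpoly) := rfl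
  rw [h1, Matrix.charpoly, Matrix.charpoly, RingHom.map_det]
  congr 1
  ext i j
  by_cases h : i = j
  · subst h
    simp [Matrix.charmatrix_apply_eq, Matrix.add_apply, Matrix.one_apply_eq,
      RingHom.mapMatrix_apply, Matrix.map_apply, eval₂_sub, eval₂_X, eval₂_C, C_add, C_1]
  · simp [Matrix.charmatrix_apply_ne _ _ _ h, Matrix.add_apply, Matrix.one_apply_ne h,
      RingHom.mapMatrix_apply, Matrix.map_apply, eval₂_neg, eval₂_C]

private def cmat (n : ℕ) : Matrix (Option (Fin (n-1)) ⊕ Option (Fin (n-1))) (Fin 4) ℝ :=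
  fun v => match v with
  | .inl none => ![1,0,0,1]
  | .inr none => ![0,1,1,0]
  | .inl (some _) => ![0,1,1,1]
  | .inr (some _) => ![1,0,1,1]

private def dmat (n : ℕ) : Matrix (Fin 4) (Option (Fin (n-1)) ⊕ Option (Fin (n-1))) ℝ :=
  fun k v => match v with
  | .inl none => if k = 0 then 1 else 0
  | .inr none => if k = 1 then 1 else 0
  | .inl (some _) => if k = 2 then 1 else 0
  | .inr (some _) => if k = 3 then 1 else 0

private lemma adj_eq (n : ℕ) : adjMat ((doubleStar n)ᶜ) = cmat n * dmat n - 1 := by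
  letI := Classical.decRel (doubleStar n)ᶜ.Adj
  ext u v
  rw [adjMat, SimpleGraph.adjMatrix_apply]
  rcases u with (_|i)|(_|i) <;> rcases v with (_|j)|(_|j) <;>
    simp [SimpleGraph.adjMatrix_apply, doubleStar, SimpleGraph.compl_adj,
      SimpleGraph.fromRel_adj, cmat, dmat, Matrix.mul_apply, Fin.sum_univ_four,
      Matrix.sub_apply, Matrix.one_apply] <;>
    first
      | rfl
      | (by_cases hij : i = j <;> simp [hij])

private lemma dc_eq (n : ℕ) (hn : 1 ≤ n) :
    dmat n * cmat n =
      !![1,0,0,1; 0,1,1,0; 0,(n:ℝ)-1,(n:ℝ)-1,(n:ℝ)-1; (n:ℝ)-1,0,(n:ℝ)-1,(n:ℝ)-1] := by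
  have hcast : ((n - 1 : ℕ) : ℝ) = (n : ℝ) - 1 := by
    rw [Nat.cast_sub hn]; norm_num
  ext k l
  rw [Matrix.mul_apply, Fintype.sum_sum_type]
  rw [Fintype.sum_option, Fintype.sum_option]
  fin_cases k <;> fin_cases l <;>
    simp [cmat, dmat, Finset.sum_const, Finset.card_univ, hcast, Matrix.vecHead, Matrix.vecTail]

private lemma cp4 (μ : ℝ) :
    (!![1,0,0,1; 0,1,1,0; 0,μ,μ,μ; μ,0,μ,μ] : Matrix (Fin 4) (Fin 4) ℝ).charpoly =
      (X^2 - C (2*μ+1) * X + C μ) * (X^2 - X - C μ) := by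
  have h : (!![1,0,0,1; 0,1,1,0; 0,μ,μ,μ; μ,0,μ,μ] : Matrix (Fin 4) (Fin 4) ℝ).charmatrix =
      !![X - C 1, 0, 0, -C 1; 0, X - C 1, -C 1, 0; 0, -C μ, X - C μ, -C μ;
         -C μ, 0, -C μ, X - C μ] := by
    ext i j
    fin_cases i <;> fin_cases j <;>
      simp [Matrix.charmatrix_apply, Matrix.diagonal_apply, Matrix.one_apply,
        Matrix.vecHead, Matrix.vecTail]
  rw [Matrix.charpoly, h]
  simp [Matrix.det_succ_row_zero, Fin.sum_univ_succ, Matrix.vecHead, Matrix.vecTail,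
    show ((2 : Fin 3).castSucc : Fin 4) = 2 by decide,
    show ((1 : Fin 2).castSucc : Fin 3) = 1 by decide,
    show Fin.succAbove (3 : Fin 4) (2 : Fin 3) = 2 by decide,
    map_ofNat]
  ring

/-- The characteristic polynomial of the complement of the double star. -/
private lemma charpoly_eq (n : ℕ) (hn : 3 ≤ n) :
    (adjMat ((doubleStar n)ᶜ)).charpoly =
      (X ^ 2 - C (2 * (n : ℝ) - 3) * X - C ((n : ℝ) - 1)) *
      (X ^ 2 + X - C ((n : ℝ) - 1)) * (X + 1) ^ (2 * n - 4) := by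
  set A := adjMat ((doubleStar n)ᶜ) with hA
  have hcard : Fintype.card (Option (Fin (n-1)) ⊕ Option (Fin (n-1))) = 2 * n := by
    simp [Fintype.card_sum, Fintype.card_option]
    omega
  have hA1 : A + 1 = cmat n * dmat n := by rw [hA, adj_eq n]; exact sub_add_cancel _ _
  have hkey := charpoly_mul_key (cmat n) (dmat n)
  rw [hcard, Fintype.card_fin, dc_eq n (by omega), cp4 ((n:ℝ)-1)] at hkey
  set g4 : ℝ[X] := (X^2 - C (2*((n:ℝ)-1)+1) * X + C ((n:ℝ)-1)) * (X^2 - X - C ((n:ℝ)-1))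
    with hg4
  have hXpow : (X : ℝ[X]) ^ (2*n) = X ^ (2*n-4) * X ^ 4 := by
    rw [← pow_add]
    congr 1
    omega
  have hcp1 : (A + 1).charpoly = g4 * X ^ (2*n-4) := by
    have h4 : (X : ℝ[X]) ^ 4 ≠ 0 := pow_ne_zero _ X_ne_zero
    apply mul_right_cancel₀ h4
    rw [hA1, hkey, hXpow]
    ring
  rw [charpoly_shift A, hcp1, mul_comp, pow_comp, X_comp, hg4]
  simp only [mul_comp, sub_comp, add_comp, pow_comp, X_comp, C_comp]
  simp only [C_sub, C_add, C_mul, C_1, map_ofNat]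
  ring

/-- For every `n ≥ 3`, the multiset of adjacency eigenvalues of the
complement `S̄_{n,n}` of the double star consists of `(-1 ± √(4n-3))/2`,
`(2n - 3 ± √(4n² - 8n + 5))/2`, together with `-1` with multiplicity `2n - 4`;
equivalently, its characteristic polynomial is
`(x² - (2n-3)x - (n-1)) (x² + x - (n-1)) (x+1)^(2n-4)`. -/
theorem doubleStarComplement_spectrum (n : ℕ) (hn : 3 ≤ n) :
    (adjMat ((doubleStar n)ᶜ)).charpoly.roots =
      ({(-1 + Real.sqrt (4 * (n : ℝ) - 3)) / 2,
        (-1 - Real.sqrt (4 * (n : ℝ) - 3)) / 2,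
        (2 * (n : ℝ) - 3 + Real.sqrt (4 * (n : ℝ) ^ 2 - 8 * (n : ℝ) + 5)) / 2,
        (2 * (n : ℝ) - 3 - Real.sqrt (4 * (n : ℝ) ^ 2 - 8 * (n : ℝ) + 5)) / 2} +
       Multiset.replicate (2 * n - 4) (-1 : ℝ)) ∧
    (adjMat ((doubleStar n)ᶜ)).charpoly =
      (X ^ 2 - C (2 * (n : ℝ) - 3) * X - C ((n : ℝ) - 1)) *
      (X ^ 2 + X - C ((n : ℝ) - 1)) * (X + 1) ^ (2 * n - 4) := by
  have hcp := charpoly_eq n hn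
  refine ⟨?_, hcp⟩
  have hn' : (3 : ℝ) ≤ (n : ℝ) := by exact_mod_cast hn
  set r1 : ℝ := (-1 + Real.sqrt (4 * (n : ℝ) - 3)) / 2
  set r2 : ℝ := (-1 - Real.sqrt (4 * (n : ℝ) - 3)) / 2
  set r3 : ℝ := (2 * (n : ℝ) - 3 + Real.sqrt (4 * (n : ℝ) ^ 2 - 8 * (n : ℝ) + 5)) / 2
  set r4 : ℝ := (2 * (n : ℝ) - 3 - Real.sqrt (4 * (n : ℝ) ^ 2 - 8 * (n : ℝ) + 5)) / 2
  have hs1 : Real.sqrt (4 * (n : ℝ) - 3) ^ 2 = 4 * (n : ℝ) - 3 :=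
    Real.sq_sqrt (by linarith)
  have hs2 : Real.sqrt (4 * (n : ℝ) ^ 2 - 8 * (n : ℝ) + 5) ^ 2
      = 4 * (n : ℝ) ^ 2 - 8 * (n : ℝ) + 5 :=
    Real.sq_sqrt (by nlinarith)
  have hq2 : (X ^ 2 + X - C ((n : ℝ) - 1) : ℝ[X]) = (X - C r1) * (X - C r2) := by
    have e : (X - C r1) * (X - C r2) = X^2 - C (r1 + r2) * X + C (r1 * r2) := by
      simp only [C_add, C_mul]
      ring
    have h1 : r1 + r2 = -1 := by rw [show r1 = _ from rfl, show r2 = _ from rfl]; ring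
    have h2 : r1 * r2 = 1 - (n : ℝ) := by
      have : r1 * r2 = ((-1)^2 - Real.sqrt (4 * (n : ℝ) - 3) ^ 2) / 4 := by ring
      rw [this, hs1]
      ring
    rw [e, h1, h2]
    simp only [map_neg, map_one, map_sub, C_1]
    ring
  have hq1 : (X ^ 2 - C (2 * (n : ℝ) - 3) * X - C ((n : ℝ) - 1) : ℝ[X])
      = (X - C r3) * (X - C r4) := by
    have e : (X - C r3) * (X - C r4) = X^2 - C (r3 + r4) * X + C (r3 * r4) := by
      simp only [C_add, C_mul]
      ring
    have h1 : r3 + r4 = 2 * (n : ℝ) - 3 := by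
      rw [show r3 = _ from rfl, show r4 = _ from rfl]; ring
    have h2 : r3 * r4 = 1 - (n : ℝ) := by
      have : r3 * r4 = ((2 * (n : ℝ) - 3)^2
          - Real.sqrt (4 * (n : ℝ) ^ 2 - 8 * (n : ℝ) + 5) ^ 2) / 4 := by ring
      rw [this, hs2]
      ring
    rw [e, h1, h2]
    simp only [map_sub, map_mul, map_add, map_one, map_ofNat, C_1]
    ring
  rw [hcp, hq1, hq2]
  rw [show ((X - C r3) * (X - C r4)) * ((X - C r1) * (X - C r2)) * ((X:ℝ[X]) + 1) ^ (2*n-4)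
      = ((X - C r1) * (X - C r2)) * ((X - C r3) * (X - C r4)) * ((X:ℝ[X]) + 1) ^ (2*n-4) by
    ring]
  have hX1 : ((X : ℝ[X]) + 1) = X - C (-1) := by simp
  have hne : ∀ a : ℝ, (X - C a : ℝ[X]) ≠ 0 := fun a => X_sub_C_ne_zero a
  have hpowne : ((X : ℝ[X]) + 1) ^ (2*n-4) ≠ 0 := by
    rw [hX1]; exact pow_ne_zero _ (hne (-1))
  rw [Polynomial.roots_mul (mul_ne_zero (mul_ne_zero (mul_ne_zero (hne r1) (hne r2))
        (mul_ne_zero (hne r3) (hne r4))) hpowne),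
      Polynomial.roots_mul (mul_ne_zero (mul_ne_zero (hne r1) (hne r2))
        (mul_ne_zero (hne r3) (hne r4))),
      Polynomial.roots_mul (mul_ne_zero (hne r1) (hne r2)),
      Polynomial.roots_mul (mul_ne_zero (hne r3) (hne r4))]
  rw [hX1, Polynomial.roots_pow, Polynomial.roots_X_sub_C, Polynomial.roots_X_sub_C,
    Polynomial.roots_X_sub_C, Polynomial.roots_X_sub_C, Polynomial.roots_X_sub_C]
  have hrep : (2*n-4) • ({-1} : Multiset ℝ) = Multiset.replicate (2*n-4) (-1 : ℝ) := by
    simp [Multiset.nsmul_singleton]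
  rw [hrep]
  simp only [Multiset.insert_eq_cons, Multiset.singleton_add, Multiset.cons_add]
end

section
/- For every integer n ≥ 3, the multiset of eigenvalues of the adjacency matrix of (S̄_{n,n})⁺ (a graph on 2n vertices) consists of n−1+√(n²−3n+3), n−1−√(n²−3n+3), −1+√(n−1), −1−√(n−1), together with −1 with multiplicity 2n−4. Equivalently, the characteristic polynomial of the adjacency matrix of (S̄_{n,n})⁺ equals (x² − (2n−2)x + (n−2))·(x² + 2x − (n−2))·(x+1)^{2n−4}. -/
open Polynomial

/-- `(S̄_{n,n})⁺`: the complement of the double star with the edge `v₁v₂` between the two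
centers added. -/
def doubleStarCompPlus (n : ℕ) :
    SimpleGraph (Option (Fin (n - 1)) ⊕ Option (Fin (n - 1))) :=
  (doubleStar n)ᶜ ⊔ SimpleGraph.fromEdgeSet {s(Sum.inl none, Sum.inr none)}

namespace DSCP

abbrev V (n : ℕ) := Option (Fin (n - 1)) ⊕ Option (Fin (n - 1))

def a1 (n : ℕ) : V n → ℝ := Sum.elim (fun o => if o = none then 1 else 0) (fun _ => 0)
def b1 (n : ℕ) : V n → ℝ := Sum.elim (fun o => if o = none then 0 else 1) (fun _ => 0)
def a2 (n : ℕ) : V n → ℝ := Sum.elim (fun _ => 0) (fun o => if o = none then 1 else 0)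
def b2 (n : ℕ) : V n → ℝ := Sum.elim (fun _ => 0) (fun o => if o = none then 0 else 1)

lemma keyA (n : ℕ) : adjMat (doubleStarCompPlus n) = Matrix.of (fun i j =>
    1 - (if i = j then (1:ℝ) else 0) - a1 n i * b1 n j - b1 n i * a1 n j
      - a2 n i * b2 n j - b2 n i * a2 n j) := by
  ext i j
  simp only [adjMat, SimpleGraph.adjMatrix_apply]
  obtain (_ | p) | (_ | p) := i <;> obtain (_ | q) | (_ | q) := j <;>
    simp [doubleStarCompPlus, doubleStar, a1, b1, a2, b2, SimpleGraph.fromRel_adj] <;>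
    try split_ifs <;> simp_all

noncomputable def Umat (n : ℕ) : Matrix (V n) (Fin 4) ℝ :=
  Matrix.of fun v k => ![a1 n v, b1 n v, a2 n v, b2 n v] k

noncomputable def Wmat (n : ℕ) : Matrix (Fin 4) (V n) ℝ :=
  Matrix.of fun k v => ![b1 n v - 1, a1 n v - 1, b2 n v - 1, a2 n v - 1] k

lemma hRed (n : ℕ) (x : ℝ) :
    x • (1 : Matrix (V n) (V n) ℝ) - adjMat (doubleStarCompPlus n)
      = (x + 1) • 1 + Umat n * Wmat n := by
  rw [keyA]
  ext i j
  have hone : a1 n i + b1 n i + a2 n i + b2 n i = 1 := by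
    obtain (_ | p) | (_ | p) := i <;> simp [a1, b1, a2, b2]
  simp only [Matrix.sub_apply, Matrix.add_apply, Matrix.smul_apply, Matrix.of_apply,
    Matrix.mul_apply, Fin.sum_univ_four, Umat, Wmat, Matrix.one_apply, smul_eq_mul]
  simp only [Matrix.cons_val_zero, Matrix.cons_val_one, Matrix.head_cons,
    Matrix.cons_val_two, Matrix.cons_val_three, Matrix.tail_cons]
  split_ifs <;> nlinarith [hone]

lemma hWU (n : ℕ) :
    Wmat n * Umat n = !![-1, 0, -1, -((n-1:ℕ):ℝ);
      0, -((n-1:ℕ):ℝ), -1, -((n-1:ℕ):ℝ);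
      -1, -((n-1:ℕ):ℝ), -1, 0;
      -1, -((n-1:ℕ):ℝ), 0, -((n-1:ℕ):ℝ)] := by
  ext k l
  fin_cases k <;> fin_cases l <;>
    simp [Matrix.mul_apply, Fintype.sum_sum_type, Fintype.sum_option, Umat, Wmat,
      a1, b1, a2, b2, Finset.sum_const, Fin.sum_univ_five, Matrix.vecHead, Matrix.vecTail,
      Function.comp, Finset.sum_sub_distrib] <;> try ring

lemma hcard (n : ℕ) (hn : 1 ≤ n) : Fintype.card (V n) = 2 * n := by
  simp [V, Fintype.card_sum, Fintype.card_option]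
  omega

lemma eval_cp {α : Type*} [Fintype α] [DecidableEq α] (M : Matrix α α ℝ) (x : ℝ) :
    M.charpoly.eval x = (x • (1 : Matrix α α ℝ) - M).det := by
  rw [Matrix.charpoly, ← coe_evalRingHom, RingHom.map_det]
  congr 1
  ext i j
  by_cases h : i = j <;>
    simp [h, Matrix.charmatrix_apply_eq, Matrix.charmatrix_apply_ne, Matrix.one_apply]

theorem det_fin_four {R : Type*} [CommRing R] (A : Matrix (Fin 4) (Fin 4) R) : A.det =
    A 0 0 * (A 1 1 * A 2 2 * A 3 3 - A 1 1 * A 2 3 * A 3 2 - A 1 2 * A 2 1 * A 3 3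
      + A 1 2 * A 2 3 * A 3 1 + A 1 3 * A 2 1 * A 3 2 - A 1 3 * A 2 2 * A 3 1)
  - A 0 1 * (A 1 0 * A 2 2 * A 3 3 - A 1 0 * A 2 3 * A 3 2 - A 1 2 * A 2 0 * A 3 3
      + A 1 2 * A 2 3 * A 3 0 + A 1 3 * A 2 0 * A 3 2 - A 1 3 * A 2 2 * A 3 0)
  + A 0 2 * (A 1 0 * A 2 1 * A 3 3 - A 1 0 * A 2 3 * A 3 1 - A 1 1 * A 2 0 * A 3 3
      + A 1 1 * A 2 3 * A 3 0 + A 1 3 * A 2 0 * A 3 1 - A 1 3 * A 2 1 * A 3 0)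
  - A 0 3 * (A 1 0 * A 2 1 * A 3 2 - A 1 0 * A 2 2 * A 3 1 - A 1 1 * A 2 0 * A 3 2
      + A 1 1 * A 2 2 * A 3 0 + A 1 2 * A 2 0 * A 3 1 - A 1 2 * A 2 1 * A 3 0) := by
  rw [Matrix.det_succ_row_zero]
  simp [Fin.sum_univ_succ, Matrix.det_fin_three, Fin.succAbove,
    show (2:Fin 3).succ = 3 from rfl, show Fin.castSucc (2:Fin 3) = (2:Fin 4) from rfl]
  ring

lemma det4 (n : ℕ) (y : ℝ) :
    (y • (1 : Matrix (Fin 4) (Fin 4) ℝ) + Wmat n * Umat n).det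
      = (y^2 - ((n-1:ℕ):ℝ)) *
        (y^2 - 2*(((n-1:ℕ):ℝ)+1)*y + 3*((n-1:ℕ):ℝ)) := by
  rw [hWU]
  set m : ℝ := ((n-1:ℕ):ℝ) with hm
  have e : (y • (1 : Matrix (Fin 4) (Fin 4) ℝ) +
      !![-1, 0, -1, -m; 0, -m, -1, -m; -1, -m, -1, 0; -1, -m, 0, -m])
      = !![y-1, 0, -1, -m; 0, y-m, -1, -m; -1, -m, y-1, 0; -1, -m, 0, y-m] := by
    ext k l
    fin_cases k <;> fin_cases l <;>
      simp [Matrix.one_apply, Matrix.vecHead, Matrix.vecTail] <;> ring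
  rw [e, det_fin_four]
  simp [Matrix.vecHead, Matrix.vecTail]
  ring

lemma detval (n : ℕ) (hn : 3 ≤ n) (x : ℝ) (hx : x + 1 ≠ 0) :
    ((x • (1 : Matrix (V n) (V n) ℝ)) - adjMat (doubleStarCompPlus n)).det
      = (x^2 - (2*(n:ℝ)-2)*x + ((n:ℝ)-2)) * (x^2+2*x-((n:ℝ)-2)) * (x+1)^(2*n-4) := by
  rw [hRed]
  have e1 : ((x+1) • (1 : Matrix (V n) (V n) ℝ) + Umat n * Wmat n)
      = (x+1) • (1 + ((x+1)⁻¹ • Umat n) * Wmat n) := by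
    rw [smul_add, Matrix.smul_mul, smul_smul, mul_inv_cancel₀ hx, one_smul]
  rw [e1, Matrix.det_smul, Matrix.det_one_add_mul_comm]
  have e2 : (1 + Wmat n * ((x+1)⁻¹ • Umat n))
      = (x+1)⁻¹ • ((x+1) • (1 : Matrix (Fin 4) (Fin 4) ℝ) + Wmat n * Umat n) := by
    rw [smul_add, smul_smul, inv_mul_cancel₀ hx, one_smul, Matrix.mul_smul]
  rw [e2, Matrix.det_smul, det4, hcard n (by omega)]
  have hm : ((n-1:ℕ):ℝ) = (n:ℝ) - 1 := by
    push_cast [Nat.cast_sub (by omega : 1 ≤ n)]; ring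
  rw [hm]
  have hpow : (x+1)^(2*n) * ((x+1)⁻¹)^(Fintype.card (Fin 4)) = (x+1)^(2*n-4) := by
    have h4 : 2*n = (2*n - 4) + 4 := by omega
    rw [h4, pow_add, inv_pow, Fintype.card_fin]
    field_simp
    rw [Nat.add_sub_cancel]
  calc (x+1)^(2*n) * (((x+1)⁻¹)^(Fintype.card (Fin 4)) *
        (((x+1)^2 - ((n:ℝ)-1)) * ((x+1)^2 - 2*(((n:ℝ)-1)+1)*(x+1) + 3*((n:ℝ)-1))))
      = ((x+1)^(2*n) * ((x+1)⁻¹)^(Fintype.card (Fin 4))) *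
        (((x+1)^2 - ((n:ℝ)-1)) * ((x+1)^2 - 2*(((n:ℝ)-1)+1)*(x+1) + 3*((n:ℝ)-1))) := by ring
    _ = (x^2 - (2*(n:ℝ)-2)*x + ((n:ℝ)-2)) * (x^2+2*x-((n:ℝ)-2)) * (x+1)^(2*n-4) := by
        rw [hpow]; ring

lemma charpoly_eq (n : ℕ) (hn : 3 ≤ n) :
    (adjMat (doubleStarCompPlus n)).charpoly =
      (X ^ 2 - C (2 * (n : ℝ) - 2) * X + C ((n : ℝ) - 2)) *
      (X ^ 2 + 2 * X - C ((n : ℝ) - 2)) * (X + 1) ^ (2 * n - 4) := by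
  apply Polynomial.eq_of_infinite_eval_eq
  apply Set.Infinite.mono (s := {x : ℝ | x ≠ -1})
  · intro x hx
    have hx1 : x + 1 ≠ 0 := by
      intro h; exact hx (by linarith [h])
    simp only [Set.mem_setOf_eq]
    rw [eval_cp, detval n hn x hx1]
    simp [eval_pow, eval_mul, eval_add, eval_sub]
  · have : ({x : ℝ | x ≠ -1}) = ({-1} : Set ℝ)ᶜ := by ext x; simp
    rw [this]
    exact (Set.finite_singleton _).infinite_compl

end DSCP

/-- For every `n ≥ 3`, the multiset of adjacency eigenvalues of
`(S̄_{n,n})⁺` consists of `n - 1 ± √(n² - 3n + 3)` and `-1 ± √(n-1)`, together with `-1`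
with multiplicity `2n - 4`; equivalently, its characteristic polynomial is
`(x² - (2n-2)x + (n-2)) (x² + 2x - (n-2)) (x+1)^(2n-4)`. -/
theorem doubleStarCompPlus_spectrum (n : ℕ) (hn : 3 ≤ n) :
    (adjMat (doubleStarCompPlus n)).charpoly.roots =
      ({(n : ℝ) - 1 + Real.sqrt ((n : ℝ) ^ 2 - 3 * (n : ℝ) + 3),
        (n : ℝ) - 1 - Real.sqrt ((n : ℝ) ^ 2 - 3 * (n : ℝ) + 3),
        -1 + Real.sqrt ((n : ℝ) - 1),
        -1 - Real.sqrt ((n : ℝ) - 1)} +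
       Multiset.replicate (2 * n - 4) (-1 : ℝ)) ∧
    (adjMat (doubleStarCompPlus n)).charpoly =
      (X ^ 2 - C (2 * (n : ℝ) - 2) * X + C ((n : ℝ) - 2)) *
      (X ^ 2 + 2 * X - C ((n : ℝ) - 2)) * (X + 1) ^ (2 * n - 4) := by
  have h2 := DSCP.charpoly_eq n hn
  refine ⟨?_, h2⟩
  rw [h2]
  have hn1 : (3:ℝ) ≤ (n:ℝ) := by exact_mod_cast hn
  set s := Real.sqrt ((n : ℝ) ^ 2 - 3 * (n : ℝ) + 3) with hsdef
  set t := Real.sqrt ((n : ℝ) - 1) with htdef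
  have hs : s^2 = (n:ℝ)^2 - 3*(n:ℝ) + 3 := by
    rw [hsdef, Real.sq_sqrt]; nlinarith [sq_nonneg (2*(n:ℝ) - 3)]
  have ht : t^2 = (n:ℝ) - 1 := by
    rw [htdef, Real.sq_sqrt]; linarith
  have e : ∀ a b : ℝ, (X - C a) * (X - C b) = X^2 - C (a+b) * X + C (a*b) := by
    intro a b; rw [C_add, C_mul]; ring
  have hq1 : (X ^ 2 - C (2 * (n : ℝ) - 2) * X + C ((n : ℝ) - 2))
      = (X - C ((n:ℝ) - 1 + s)) * (X - C ((n:ℝ) - 1 - s)) := by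
    rw [e]
    have e1 : ((n:ℝ) - 1 + s) + ((n:ℝ) - 1 - s) = 2 * (n:ℝ) - 2 := by ring
    have e2 : ((n:ℝ) - 1 + s) * ((n:ℝ) - 1 - s) = (n:ℝ) - 2 := by nlinarith [hs]
    rw [e1, e2]
  have hq2 : (X ^ 2 + 2 * X - C ((n : ℝ) - 2))
      = (X - C (-1 + t)) * (X - C (-1 - t)) := by
    rw [e]
    have e1 : (-1 + t) + (-1 - t) = (-2 : ℝ) := by ring
    have e2 : (-1 + t) * (-1 - t) = -((n:ℝ) - 2) := by nlinarith [ht]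
    rw [e1, e2]
    simp only [map_neg, map_ofNat]
    ring
  have hX1 : (X + 1 : ℝ[X]) = X - C (-1) := by simp
  rw [hq1, hq2, hX1]
  have hne : ∀ r : ℝ, (X - C r) ≠ 0 := fun r => X_sub_C_ne_zero r
  have h12 : (X - C ((n:ℝ) - 1 + s)) * (X - C ((n:ℝ) - 1 - s)) ≠ 0 := mul_ne_zero (hne _) (hne _)
  have h34 : (X - C (-1 + t)) * (X - C (-1 - t)) ≠ 0 := mul_ne_zero (hne _) (hne _)
  have hpw : ((X - C (-1 : ℝ)) ^ (2 * n - 4)) ≠ 0 := pow_ne_zero _ (hne _)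
  rw [Polynomial.roots_mul (mul_ne_zero (mul_ne_zero h12 h34) hpw),
    Polynomial.roots_mul (mul_ne_zero h12 h34),
    Polynomial.roots_mul h12, Polynomial.roots_mul h34, Polynomial.roots_pow]
  simp only [Polynomial.roots_X_sub_C, Multiset.nsmul_singleton,
    Multiset.singleton_add, Multiset.cons_add, Multiset.insert_eq_cons]
end

section
/- Let G be a simple graph on n vertices, let e be an edge of G and H = G − e, and let λ_1 ≥ ⋯ ≥ λ_n and θ_1 ≥ ⋯ ≥ θ_n denote the eigenvalues of the adjacency matrices A(G) and A(H), respectively. Then for every t with 1 ≤ t ≤ n, Σ_{j=1}^{t} λ_j ≥ (Σ_{j=1}^{t} θ_j) − 1. -/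
open Polynomial

section Aux

open Matrix
open scoped RealInnerProductSpace

/- ### Charpoly / eigenvalue multiset identification -/

theorem aux_charpoly_conj (n : ℕ) (U D : Matrix (Fin n) (Fin n) ℝ) (hU : U * star U = 1) :
    (U * D * star U).charpoly = D.charpoly := by
  unfold Matrix.charpoly
  set f : Matrix (Fin n) (Fin n) ℝ →+* Matrix (Fin n) (Fin n) ℝ[X] :=
    (C : ℝ →+* ℝ[X]).mapMatrix with hf
  have hc : charmatrix (U * D * star U) = f U * charmatrix D * f (star U) := by
    unfold charmatrix
    rw [Matrix.mul_sub, Matrix.sub_mul]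
    congr 1
    · have hcomm : f U * Matrix.scalar (Fin n) (X : ℝ[X])
          = Matrix.scalar (Fin n) (X : ℝ[X]) * f U :=
        (scalar_commute (X : ℝ[X]) (Commute.all _) (f U)).symm
      rw [hcomm, Matrix.mul_assoc, ← _root_.map_mul, hU, _root_.map_one f, Matrix.mul_one]
    · rw [← _root_.map_mul, ← _root_.map_mul]
  rw [hc, det_mul, det_mul]
  have hdet : det (f U) * det (f (star U)) = 1 := by
    rw [← det_mul, ← _root_.map_mul, hU, _root_.map_one f, det_one]
  calc det (f U) * det (charmatrix D) * det (f (star U))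
      = (det (f U) * det (f (star U))) * det (charmatrix D) := by ring
    _ = det (charmatrix D) := by rw [hdet, one_mul]

theorem aux_charpoly_diag (n : ℕ) (d : Fin n → ℝ) :
    (Matrix.diagonal d).charpoly = ∏ i, (X - C (d i)) := by
  unfold Matrix.charpoly charmatrix
  have h : Matrix.scalar (Fin n) (X : ℝ[X]) - (C : ℝ →+* ℝ[X]).mapMatrix (diagonal d)
      = diagonal (fun i => X - C (d i)) := by
    ext i j
    by_cases h : i = j <;> simp [h, diagonal, scalar]
  rw [h, det_diagonal]

theorem aux_charpoly_eq_prod (n : ℕ) (M : Matrix (Fin n) (Fin n) ℝ) (hM : M.IsHermitian) :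
    M.charpoly = ∏ i, (X - C (hM.eigenvalues i)) := by
  have hst := hM.spectral_theorem (𝕜 := ℝ)
  have hco : (RCLike.ofReal ∘ hM.eigenvalues : Fin n → ℝ) = hM.eigenvalues := by
    ext i; simp
  rw [hco] at hst
  set U := (hM.eigenvectorUnitary : Matrix (Fin n) (Fin n) ℝ) with hUdef
  have hU : U * star U = 1 := (Matrix.mem_unitaryGroup_iff).mp hM.eigenvectorUnitary.2
  have h := congrArg Matrix.charpoly hst
  rw [h, Unitary.conjStarAlgAut_apply, ← hUdef, aux_charpoly_conj n U _ hU, aux_charpoly_diag]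

theorem aux_roots_eq (n : ℕ) (M : Matrix (Fin n) (Fin n) ℝ) (hM : M.IsHermitian) :
    M.charpoly.roots = Finset.univ.val.map hM.eigenvalues := by
  rw [aux_charpoly_eq_prod n M hM, Finset.prod_eq_multiset_prod]
  have h : Multiset.map (fun i => X - C (hM.eigenvalues i)) Finset.univ.val
      = Multiset.map (fun a => X - C a) (Finset.univ.val.map hM.eigenvalues) := by
    rw [Multiset.map_map]; rfl
  rw [h, roots_multiset_prod_X_sub_C]

theorem aux_range_eq_univ_map (n : ℕ) :
    (Multiset.range n) = Finset.univ.val.map (Fin.val : Fin n → ℕ) := by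
  have h := Fin.map_valEmbedding_univ (n := n)
  rw [Nat.Iio_eq_range] at h
  have h2 : (Finset.range n).val = Multiset.range n := rfl
  rw [← h2, ← h, Finset.map_val]
  rfl

/- ### Sorting permutation extraction -/

theorem aux_map_univ_perm {n : ℕ} (e : Equiv.Perm (Fin n)) :
    Finset.univ.val.map ⇑e = Finset.univ.val := by
  conv_rhs => rw [← Finset.map_univ_equiv e, Finset.map_val]
  rfl

theorem aux_antitone_tuple_unique {n : ℕ} (f g : Fin n → ℝ)
    (hf : Antitone f) (hg : Antitone g)
    (h : Finset.univ.val.map f = Finset.univ.val.map g) : f = g := by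
  apply List.ofFn_injective
  refine (fun p s₁ s₂ => List.Perm.eq_of_pairwise' (r := (· ≥ ·)) s₁ s₂ p) ?_ ?_ ?_
  · rw [← Multiset.coe_eq_coe]
    have h1 : ((List.ofFn f : List ℝ) : Multiset ℝ) = Finset.univ.val.map f := by
      rw [List.ofFn_eq_map]; rfl
    have h2 : ((List.ofFn g : List ℝ) : Multiset ℝ) = Finset.univ.val.map g := by
      rw [List.ofFn_eq_map]; rfl
    rw [h1, h2, h]
  · rw [List.pairwise_ofFn]; intro i j hij; exact hf hij.le
  · rw [List.pairwise_ofFn]; intro i j hij; exact hg hij.le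

theorem aux_exists_perm_antitone {n : ℕ} (μ : Fin n → ℝ) (lam : ℕ → ℝ) (hlam : Antitone lam)
    (h : Finset.univ.val.map μ = Finset.univ.val.map (fun i : Fin n => lam i)) :
    ∃ π : Equiv.Perm (Fin n), ∀ k, μ k = lam (π k) := by
  classical
  let σ := Tuple.sort μ
  have hmono : Monotone (μ ∘ σ) := Tuple.monotone_sort μ
  set e : Equiv.Perm (Fin n) := Fin.revPerm.trans σ with he
  set g : Fin n → ℝ := μ ∘ e with hg
  have hganti : Antitone g := by
    intro i j hij
    exact hmono (Fin.rev_le_rev.mpr hij)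
  have hmult : Finset.univ.val.map g = Finset.univ.val.map (fun i : Fin n => lam i) := by
    rw [← h, hg, ← Multiset.map_map μ ⇑e, aux_map_univ_perm]
  have hgeq := aux_antitone_tuple_unique g (fun i : Fin n => lam i) hganti
    (fun i j hij => hlam (by exact_mod_cast hij)) hmult
  refine ⟨e.symm, fun k => ?_⟩
  have h2 : g (e.symm k) = lam (e.symm k) := congrFun hgeq (e.symm k)
  simpa [hg] using h2

/- ### Majorization arithmetic -/

theorem aux_maj_lemma {n t : ℕ} (lam : ℕ → ℝ) (hmono : Antitone lam) (ht : 1 ≤ t) (htn : t ≤ n)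
    (c : Fin n → ℝ) (hc0 : ∀ k, 0 ≤ c k) (hc1 : ∀ k, c k ≤ 1) (hsum : ∑ k, c k = (t : ℝ)) :
    (∑ k : Fin n, lam k * c k) ≤ ∑ j ∈ Finset.range t, lam j := by
  set m := lam (t - 1) with hm
  have key : ∀ k : Fin n, lam k * c k ≤ max (lam k - m) 0 + m * c k := by
    intro k
    rcases le_or_gt m (lam k) with h | h
    · have h2 : (lam k - m) * c k ≤ (lam k - m) * 1 :=
        mul_le_mul_of_nonneg_left (hc1 k) (by linarith)
      calc lam (k : ℕ) * c k = (lam k - m) * c k + m * c k := by ring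
        _ ≤ (lam k - m) + m * c k := by linarith
        _ ≤ max (lam k - m) 0 + m * c k := add_le_add_left (le_max_left _ _) _
    · have h1 : (lam k - m) * c k ≤ 0 :=
        mul_nonpos_of_nonpos_of_nonneg (by linarith) (hc0 k)
      calc lam (k : ℕ) * c k = (lam k - m) * c k + m * c k := by ring
        _ ≤ 0 + m * c k := by linarith
        _ ≤ max (lam k - m) 0 + m * c k := add_le_add_left (le_max_right _ _) _
  calc (∑ k : Fin n, lam k * c k) ≤ ∑ k : Fin n, (max (lam k - m) 0 + m * c k) :=
        Finset.sum_le_sum fun k _ => key k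
    _ = (∑ k : Fin n, max (lam (k : ℕ) - m) 0) + m * t := by
        rw [Finset.sum_add_distrib, ← Finset.mul_sum, hsum]
    _ = (∑ j ∈ Finset.range n, max (lam j - m) 0) + m * t := by
        rw [Fin.sum_univ_eq_sum_range (fun j => max (lam j - m) 0)]
    _ = (∑ j ∈ Finset.range t, max (lam j - m) 0) + m * t := by
        congr 1
        refine (Finset.sum_subset (Finset.range_subset_range.mpr htn) ?_).symm
        intro j hj hjt
        rw [Finset.mem_range] at hj hjt
        have hle : lam j ≤ m := hmono (by omega)
        simp [max_eq_right, sub_nonpos.mpr hle]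
    _ = (∑ j ∈ Finset.range t, (lam j - m)) + m * t := by
        congr 1
        refine Finset.sum_congr rfl fun j hj => ?_
        rw [Finset.mem_range] at hj
        have h3 : m ≤ lam j := hmono (by omega)
        exact max_eq_left (by linarith)
    _ = ∑ j ∈ Finset.range t, lam j := by
        rw [Finset.sum_sub_distrib, Finset.sum_const, Finset.card_range]
        ring

/- ### Quadratic forms and Ky Fan bounds -/

theorem aux_quad_form_eq {n : ℕ} (M : Matrix (Fin n) (Fin n) ℝ) (hM : M.IsHermitian)
    (z : EuclideanSpace ℝ (Fin n)) :
    dotProduct (z : Fin n → ℝ) (M *ᵥ (z : Fin n → ℝ))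
      = ∑ k, hM.eigenvalues k * (⟪hM.eigenvectorBasis (𝕜 := ℝ) k, z⟫)^2 := by
  have hsymm : Mᵀ = M := by
    have h := hM.eq
    rwa [Matrix.conjTranspose_eq_transpose_of_trivial] at h
  set B := hM.eigenvectorBasis (𝕜 := ℝ)
  set w : EuclideanSpace ℝ (Fin n) := WithLp.toLp 2 (M *ᵥ (z : Fin n → ℝ) : Fin n → ℝ) with hw
  have h1 : dotProduct (z : Fin n → ℝ) (M *ᵥ (z : Fin n → ℝ)) = ⟪z, w⟫ := by
    simp [PiLp.inner_apply, dotProduct, hw, mul_comm]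
  rw [h1, ← B.sum_inner_mul_inner z w]
  refine Finset.sum_congr rfl fun k _ => ?_
  have h2 : ⟪B k, w⟫ = hM.eigenvalues k * ⟪B k, z⟫ := by
    have h3 : ⟪B k, w⟫ = dotProduct (⇑(B k)) (M *ᵥ (z : Fin n → ℝ)) := by
      simp [PiLp.inner_apply, dotProduct, hw, mul_comm]
    rw [h3, dotProduct_mulVec, ← mulVec_transpose, hsymm, hM.mulVec_eigenvectorBasis]
    simp only [PiLp.inner_apply, RCLike.inner_apply, starRingEnd_apply, star_trivial,
      Pi.smul_apply, smul_eq_mul, dotProduct, Finset.mul_sum]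
    exact Finset.sum_congr rfl fun i _ => by ring
  rw [h2, real_inner_comm z (B k)]
  ring

theorem aux_kyfan_upper {n t : ℕ} (M : Matrix (Fin n) (Fin n) ℝ) (hM : M.IsHermitian)
    (lam : ℕ → ℝ) (hmono : Antitone lam) (π : Equiv.Perm (Fin n))
    (hπ : ∀ k, hM.eigenvalues k = lam (π k)) (ht : 1 ≤ t) (htn : t ≤ n)
    (v : Fin t → EuclideanSpace ℝ (Fin n)) (hv : Orthonormal ℝ v) :
    (∑ i : Fin t, dotProduct (v i : Fin n → ℝ) (M *ᵥ (v i : Fin n → ℝ)))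
      ≤ ∑ j ∈ Finset.range t, lam j := by
  classical
  set B := hM.eigenvectorBasis (𝕜 := ℝ) with hB
  set c : Fin n → ℝ := fun k => ∑ i : Fin t, (⟪B k, v i⟫)^2 with hc
  have hc0 : ∀ k, 0 ≤ c k := fun k => Finset.sum_nonneg fun i _ => sq_nonneg _
  have hc1 : ∀ k, c k ≤ 1 := by
    intro k
    have hb := hv.sum_inner_products_le (𝕜 := ℝ) (B k) (s := Finset.univ)
    have hnorm : ‖B k‖ = 1 := B.orthonormal.1 k
    calc c k = ∑ i : Fin t, ‖⟪v i, B k⟫‖^2 := by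
          refine Finset.sum_congr rfl fun i _ => ?_
          rw [real_inner_comm, Real.norm_eq_abs, sq_abs]
      _ ≤ ‖B k‖^2 := hb
      _ = 1 := by rw [hnorm]; norm_num
  have hcsum : ∑ k, c k = (t : ℝ) := by
    rw [hc, Finset.sum_comm]
    have h : ∀ i : Fin t, ∑ k : Fin n, (⟪B k, v i⟫)^2 = 1 := by
      intro i
      have hp := B.sum_inner_mul_inner (v i) (v i)
      have hvi : ⟪v i, v i⟫ = 1 := by
        rw [real_inner_self_eq_norm_sq, hv.1 i]; norm_num
      rw [hvi] at hp
      rw [← hp]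
      refine Finset.sum_congr rfl fun k _ => ?_
      rw [real_inner_comm (v i) (B k)]; ring
    rw [Finset.sum_congr rfl fun i _ => h i]
    simp
  have hq : ∀ i : Fin t, dotProduct (v i : Fin n → ℝ) (M *ᵥ (v i : Fin n → ℝ))
      = ∑ k, hM.eigenvalues k * (⟪B k, v i⟫)^2 := fun i => aux_quad_form_eq M hM (v i)
  calc (∑ i : Fin t, dotProduct (v i : Fin n → ℝ) (M *ᵥ (v i : Fin n → ℝ)))
      = ∑ i : Fin t, ∑ k : Fin n, hM.eigenvalues k * (⟪B k, v i⟫)^2 :=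
        Finset.sum_congr rfl fun i _ => hq i
    _ = ∑ k : Fin n, hM.eigenvalues k * c k := by
        rw [Finset.sum_comm]
        exact Finset.sum_congr rfl fun k _ => by rw [hc, Finset.mul_sum]
    _ = ∑ k : Fin n, lam (π k) * c k :=
        Finset.sum_congr rfl fun k _ => by rw [hπ k]
    _ = ∑ k : Fin n, lam k * c (π.symm k) := by
        rw [← Equiv.sum_comp π (fun k => lam k * c (π.symm k))]
        simp
    _ ≤ ∑ j ∈ Finset.range t, lam j := by
        refine aux_maj_lemma lam hmono ht htn (c ∘ π.symm) (fun k => hc0 _) (fun k => hc1 _) ?_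
        rw [← Equiv.sum_comp π.symm c] at hcsum
        exact hcsum

theorem aux_kyfan_attain {n t : ℕ} (M : Matrix (Fin n) (Fin n) ℝ) (hM : M.IsHermitian)
    (θ : ℕ → ℝ) (π : Equiv.Perm (Fin n)) (hπ : ∀ k, hM.eigenvalues k = θ (π k)) (htn : t ≤ n) :
    ∃ w : Fin t → EuclideanSpace ℝ (Fin n), Orthonormal ℝ w ∧
      ∀ j : Fin t, dotProduct (w j : Fin n → ℝ) (M *ᵥ (w j : Fin n → ℝ)) = θ j := by
  set B := hM.eigenvectorBasis (𝕜 := ℝ) with hB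
  refine ⟨fun j => B (π.symm (Fin.castLE htn j)), B.orthonormal.comp _ ?_, fun j => ?_⟩
  · exact fun a b hab => Fin.castLE_injective htn (π.symm.injective hab)
  · set k := π.symm (Fin.castLE htn j) with hk
    show dotProduct (⇑(B k)) (M *ᵥ ⇑(B k)) = θ j
    have hmv : M *ᵥ ⇑(B k) = hM.eigenvalues k • ⇑(B k) := hM.mulVec_eigenvectorBasis k
    have hunit : dotProduct (⇑(B k)) (⇑(B k)) = 1 := by
      have h1 : ⟪B k, B k⟫ = 1 := by
        rw [real_inner_self_eq_norm_sq, B.orthonormal.1 k]; norm_num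
      rw [← h1]; simp only [PiLp.inner_apply, dotProduct, RCLike.inner_apply, conj_trivial]
    rw [hmv]
    have h2 : dotProduct (⇑(B k)) (hM.eigenvalues k • ⇑(B k))
        = hM.eigenvalues k * dotProduct (⇑(B k)) (⇑(B k)) := by
      simp only [dotProduct, Pi.smul_apply, smul_eq_mul, Finset.mul_sum]
      exact Finset.sum_congr rfl fun i _ => by ring
    rw [h2, hunit, mul_one, hπ k, hk]
    simp

theorem aux_quad_vecMulVec {n : ℕ} (x z : Fin n → ℝ) :
    dotProduct z ((vecMulVec x x) *ᵥ z) = (dotProduct x z)^2 := by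
  have h1 : (vecMulVec x x) *ᵥ z = (dotProduct x z) • x := by
    ext i
    simp only [mulVec, vecMulVec_apply, dotProduct, Pi.smul_apply, smul_eq_mul, Finset.sum_mul]
    exact Finset.sum_congr rfl fun b _ => by ring
  rw [h1]
  have h2 : dotProduct z ((dotProduct x z) • x) = (dotProduct x z) * dotProduct z x := by
    simp only [dotProduct, Pi.smul_apply, smul_eq_mul, Finset.mul_sum]
    exact Finset.sum_congr rfl fun b _ => by ring
  rw [h2, dotProduct_comm]
  ring

/- ### Adjacency matrix facts -/

theorem aux_adjMat_apply {V : Type*} [Fintype V] (G : SimpleGraph V) (a b : V) :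
    adjMat G a b = (letI := Classical.decRel G.Adj; if G.Adj a b then (1:ℝ) else 0) := rfl

theorem aux_adjMat_isHermitian {n : ℕ} (G : SimpleGraph (Fin n)) : (adjMat G).IsHermitian := by
  ext a b
  simp only [Matrix.conjTranspose_apply, star_trivial, aux_adjMat_apply]
  by_cases h : G.Adj b a
  · rw [if_pos h, if_pos h.symm]
  · rw [if_neg h, if_neg (fun h' => h h'.symm)]

theorem aux_adj_decomp {n : ℕ} (G H : SimpleGraph (Fin n)) (u₀ v₀ : Fin n)
    (hne : u₀ ≠ v₀) (hadj : G.Adj u₀ v₀) (hH : H = G.deleteEdges {s(u₀, v₀)}) :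
    adjMat H = adjMat G
      - vecMulVec (fun i => ((if i = u₀ then 1 else 0) + (if i = v₀ then 1 else 0)) * (Real.sqrt 2)⁻¹)
          (fun i => ((if i = u₀ then 1 else 0) + (if i = v₀ then 1 else 0)) * (Real.sqrt 2)⁻¹)
      + vecMulVec (fun i => ((if i = u₀ then 1 else 0) - (if i = v₀ then 1 else 0)) * (Real.sqrt 2)⁻¹)
          (fun i => ((if i = u₀ then 1 else 0) - (if i = v₀ then 1 else 0)) * (Real.sqrt 2)⁻¹) := by
  classical
  have hs : (Real.sqrt 2)⁻¹ * (Real.sqrt 2)⁻¹ = 1/2 := by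
    rw [← mul_inv, Real.mul_self_sqrt (by norm_num : (0:ℝ) ≤ 2)]
    norm_num
  ext a b
  simp only [Matrix.sub_apply, Matrix.add_apply, vecMulVec_apply, aux_adjMat_apply]
  have hHadj : H.Adj a b ↔ (G.Adj a b ∧ ¬ (s(a,b) : Sym2 (Fin n)) = s(u₀,v₀)) := by
    rw [hH, SimpleGraph.deleteEdges_adj]
    simp
  by_cases hc : (a = u₀ ∧ b = v₀) ∨ (a = v₀ ∧ b = u₀)
  · have heq : (s(a,b) : Sym2 (Fin n)) = s(u₀,v₀) := by
      rw [Sym2.eq_iff]; tauto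
    have hG : G.Adj a b := by
      rcases hc with ⟨rfl, rfl⟩ | ⟨rfl, rfl⟩
      · exact hadj
      · exact hadj.symm
    have hHn : ¬ H.Adj a b := by rw [hHadj]; tauto
    rw [if_neg hHn, if_pos hG]
    rcases hc with ⟨rfl, rfl⟩ | ⟨rfl, rfl⟩
    · rw [if_pos rfl, if_pos rfl, if_neg hne, if_neg (Ne.symm hne)]
      linear_combination 2 * hs
    · rw [if_pos rfl, if_pos rfl, if_neg (Ne.symm hne), if_neg hne]
      linear_combination 2 * hs
  · have hneq : ¬ (s(a,b) : Sym2 (Fin n)) = s(u₀,v₀) := by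
      rw [Sym2.eq_iff]; tauto
    have hHG : H.Adj a b ↔ G.Adj a b := by rw [hHadj]; tauto
    push_neg at hc
    have hz : (if a = u₀ then (1:ℝ) else 0) * (if b = v₀ then 1 else 0) = 0 := by
      by_cases h1 : a = u₀
      · by_cases h2 : b = v₀
        · exact absurd h2 (hc.1 h1)
        · rw [if_neg h2]; ring
      · rw [if_neg h1]; ring
    have hz2 : (if a = v₀ then (1:ℝ) else 0) * (if b = u₀ then 1 else 0) = 0 := by
      by_cases h1 : a = v₀
      · by_cases h2 : b = u₀
        · exact absurd h2 (hc.2 h1)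
        · rw [if_neg h2]; ring
      · rw [if_neg h1]; ring
    by_cases hG : G.Adj a b
    · rw [if_pos hG, if_pos (hHG.mpr hG)]
      linear_combination (2*(Real.sqrt 2)⁻¹*(Real.sqrt 2)⁻¹) * hz
        + (2*(Real.sqrt 2)⁻¹*(Real.sqrt 2)⁻¹) * hz2
    · rw [if_neg hG, if_neg (fun h => hG (hHG.mp h))]
      linear_combination (2*(Real.sqrt 2)⁻¹*(Real.sqrt 2)⁻¹) * hz
        + (2*(Real.sqrt 2)⁻¹*(Real.sqrt 2)⁻¹) * hz2

end Aux

open scoped RealInnerProductSpace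

/-- Let `G` be a simple graph on `n` vertices, `e ∈ E(G)`, `H = G - e`,
with `lam` and `θ` the nonincreasing lists of eigenvalues of `A(G)` and `A(H)` (0-indexed).
Then for every `1 ≤ t ≤ n`, `Σ_{j=1}^t λ_j ≥ (Σ_{j=1}^t θ_j) - 1`. -/
theorem partial_sum_eigenvalues_edge_deletion {n : ℕ}
    (G H : SimpleGraph (Fin n)) (e : Sym2 (Fin n)) (he : e ∈ G.edgeSet)
    (hH : H = G.deleteEdges {e})
    (lam θ : ℕ → ℝ) (hlam_mono : Antitone lam) (hθ_mono : Antitone θ)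
    (hlam : (adjMat G).charpoly.roots = (Multiset.range n).map lam)
    (hθ : (adjMat H).charpoly.roots = (Multiset.range n).map θ) :
    ∀ t : ℕ, 1 ≤ t → t ≤ n →
      ∑ j ∈ Finset.range t, lam j ≥ (∑ j ∈ Finset.range t, θ j) - 1 := by
  classical
  open Matrix in
  induction e using Sym2.ind with
  | _ u₀ v₀ =>
  intro t ht htn
  have hadj : G.Adj u₀ v₀ := (SimpleGraph.mem_edgeSet G).mp he
  have hne : u₀ ≠ v₀ := hadj.ne
  have hermG := aux_adjMat_isHermitian G
  have hermH := aux_adjMat_isHermitian H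
  -- identify eigenvalue multisets
  have hmG : Finset.univ.val.map hermG.eigenvalues
      = Finset.univ.val.map (fun i : Fin n => lam i) := by
    rw [← aux_roots_eq n _ hermG, hlam, aux_range_eq_univ_map, Multiset.map_map]
    rfl
  have hmH : Finset.univ.val.map hermH.eigenvalues
      = Finset.univ.val.map (fun i : Fin n => θ i) := by
    rw [← aux_roots_eq n _ hermH, hθ, aux_range_eq_univ_map, Multiset.map_map]
    rfl
  obtain ⟨πG, hπG⟩ := aux_exists_perm_antitone hermG.eigenvalues lam hlam_mono hmG
  obtain ⟨πH, hπH⟩ := aux_exists_perm_antitone hermH.eigenvalues θ hθ_mono hmH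
  -- eigenvectors of A(H) realizing the top t eigenvalues
  obtain ⟨w, hw, hwq⟩ := aux_kyfan_attain (adjMat H) hermH θ πH hπH htn
  -- the rank-2 edge decomposition
  set x : Fin n → ℝ :=
    fun i => ((if i = u₀ then 1 else 0) + (if i = v₀ then 1 else 0)) * (Real.sqrt 2)⁻¹ with hx
  set y : Fin n → ℝ :=
    fun i => ((if i = u₀ then 1 else 0) - (if i = v₀ then 1 else 0)) * (Real.sqrt 2)⁻¹ with hy
  have hmat : adjMat H = adjMat G - vecMulVec x x + vecMulVec y y :=
    aux_adj_decomp G H u₀ v₀ hne hadj hH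
  have hs : (Real.sqrt 2)⁻¹ * (Real.sqrt 2)⁻¹ = 1/2 := by
    rw [← mul_inv, Real.mul_self_sqrt (by norm_num : (0:ℝ) ≤ 2)]
    norm_num
  -- quadratic form decomposition for each w j
  have hdec : ∀ j : Fin t, dotProduct (w j : Fin n → ℝ) (adjMat H *ᵥ (w j : Fin n → ℝ))
      = dotProduct (w j : Fin n → ℝ) (adjMat G *ᵥ (w j : Fin n → ℝ))
        - (dotProduct x (w j : Fin n → ℝ))^2 + (dotProduct y (w j : Fin n → ℝ))^2 := by
    intro j
    rw [hmat, add_mulVec, sub_mulVec, dotProduct_add, dotProduct_sub,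
      aux_quad_vecMulVec, aux_quad_vecMulVec]
  -- Bessel bound for y
  have hynorm : dotProduct y y = 1 := by
    have hvan : ∀ i ∈ Finset.univ, i ∉ ({u₀, v₀} : Finset (Fin n)) → y i * y i = 0 := by
      intro i _ hi
      simp only [Finset.mem_insert, Finset.mem_singleton] at hi
      push_neg at hi
      rw [hy]
      simp only [if_neg hi.1, if_neg hi.2]
      ring
    have h1 : dotProduct y y = ∑ i ∈ ({u₀, v₀} : Finset (Fin n)), y i * y i := by
      rw [dotProduct]
      exact (Finset.sum_subset (Finset.subset_univ _) hvan).symm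
    rw [h1, Finset.sum_pair hne, hy]
    simp only [if_pos rfl, if_neg hne, if_neg (Ne.symm hne), if_true, eq_self_iff_true]
    norm_num
    linear_combination 2 * hs
  have hbessel : ∑ j : Fin t, (dotProduct y (w j : Fin n → ℝ))^2 ≤ 1 := by
    set yE : EuclideanSpace ℝ (Fin n) := WithLp.toLp 2 (y : Fin n → ℝ) with hyE
    have hb := hw.sum_inner_products_le (𝕜 := ℝ) yE (s := Finset.univ)
    have h1 : ∀ j : Fin t, ‖⟪w j, yE⟫‖^2 = (dotProduct y (w j : Fin n → ℝ))^2 := by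
      intro j
      rw [Real.norm_eq_abs, sq_abs]
      have h2 : ⟪w j, yE⟫ = dotProduct (w j : Fin n → ℝ) y := by
        simp [PiLp.inner_apply, dotProduct, hyE, mul_comm]
      rw [h2, dotProduct_comm]
    have h3 : ‖yE‖^2 = 1 := by
      have h4 : ⟪yE, yE⟫ = dotProduct y y := by
        simp only [hyE, PiLp.inner_apply, WithLp.ofLp_toLp, RCLike.inner_apply, conj_trivial, dotProduct]
      rw [← real_inner_self_eq_norm_sq, h4, hynorm]
    calc ∑ j : Fin t, (dotProduct y (w j : Fin n → ℝ))^2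
        = ∑ j : Fin t, ‖⟪w j, yE⟫‖^2 := (Finset.sum_congr rfl fun j _ => (h1 j).symm)
      _ ≤ ‖yE‖^2 := hb
      _ = 1 := h3
  have hxnn : 0 ≤ ∑ j : Fin t, (dotProduct x (w j : Fin n → ℝ))^2 :=
    Finset.sum_nonneg fun j _ => sq_nonneg _
  have hGbound := aux_kyfan_upper (adjMat G) hermG lam hlam_mono πG hπG ht htn w hw
  have hθsum : ∑ j ∈ Finset.range t, θ j
      = ∑ j : Fin t, dotProduct (w j : Fin n → ℝ) (adjMat H *ᵥ (w j : Fin n → ℝ)) := by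
    rw [← Fin.sum_univ_eq_sum_range θ t]
    exact Finset.sum_congr rfl fun j _ => (hwq j).symm
  have hsplit : ∑ j : Fin t, dotProduct (w j : Fin n → ℝ) (adjMat H *ᵥ (w j : Fin n → ℝ))
      = (∑ j : Fin t, dotProduct (w j : Fin n → ℝ) (adjMat G *ᵥ (w j : Fin n → ℝ)))
        - (∑ j : Fin t, (dotProduct x (w j : Fin n → ℝ))^2)
        + (∑ j : Fin t, (dotProduct y (w j : Fin n → ℝ))^2) := by
    rw [Finset.sum_congr rfl fun j _ => hdec j, Finset.sum_add_distrib,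
      Finset.sum_sub_distrib]
  rw [ge_iff_le, sub_le_iff_le_add, hθsum, hsplit]
  linarith
end

section
/- Let G be a simple graph on n vertices, let e be an edge of G and H = G − e, and let λ_1 ≥ ⋯ ≥ λ_n and θ_1 ≥ ⋯ ≥ θ_n denote the eigenvalues of the adjacency matrices A(G) and A(H), respectively. Suppose H has exactly r ≥ 2 positive eigenvalues. Then for every t with 2 ≤ t ≤ r, λ_1 + Σ_{k=2}^{t} max{λ_k, 0} ≥ θ_1 + Σ_{k=3}^{t} θ_k. -/
open Polynomial

section AuxLemmas

open Matrix Finset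
open scoped RealInnerProductSpace

variable {n : ℕ}

lemma aux_charpoly_eq {n : ℕ} (A : Matrix (Fin n) (Fin n) ℝ) (hA : A.IsHermitian) :
    A.charpoly = ∏ i, (X - C (hA.eigenvalues i)) := by
  have hU := hA.spectral_theorem
  simp only [Unitary.conjStarAlgAut_apply, Unitary.coe_star] at hU
  set U : Matrix (Fin n) (Fin n) ℝ := (hA.eigenvectorUnitary : Matrix (Fin n) (Fin n) ℝ) with hUdef
  have hUV : U * star U = 1 := Matrix.mem_unitaryGroup_iff.mp hA.eigenvectorUnitary.2
  have hVU : star U * U = 1 := Matrix.mem_unitaryGroup_iff'.mp hA.eigenvectorUnitary.2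
  have hdiag : (RCLike.ofReal ∘ hA.eigenvalues : Fin n → ℝ) = hA.eigenvalues := by
    ext i; simp
  rw [hdiag] at hU
  have key : A.charpoly = (Matrix.diagonal hA.eigenvalues).charpoly := by
    unfold Matrix.charpoly
    have hc : charmatrix A = (U.map C) * charmatrix (Matrix.diagonal hA.eigenvalues) * ((star U).map C) := by
      simp only [charmatrix, RingHom.mapMatrix_apply]
      rw [Matrix.mul_sub, Matrix.sub_mul]
      congr 1
      · rw [mul_assoc, Matrix.scalar_commute X (fun r => Commute.all X r) ((star U).map C),
          ← mul_assoc, ← Matrix.map_mul, hUV]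
        simp
      · have h2 := congrArg (fun M : Matrix (Fin n) (Fin n) ℝ => M.map (⇑C)) hU
        simp only [Matrix.map_mul] at h2
        exact h2
    rw [hc, Matrix.det_mul, Matrix.det_mul]
    rw [mul_comm, ← mul_assoc, ← Matrix.det_mul, ← Matrix.map_mul, hVU]
    simp
  rw [key, Matrix.charpoly_of_upperTriangular _ (Matrix.blockTriangular_diagonal _)]
  simp

lemma aux_roots_eq_s10 {n : ℕ} (A : Matrix (Fin n) (Fin n) ℝ) (hA : A.IsHermitian) :
    A.charpoly.roots = Finset.univ.val.map hA.eigenvalues := by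
  rw [aux_charpoly_eq A hA, Finset.prod_eq_multiset_prod]
  have : Multiset.map (fun i => X - C (hA.eigenvalues i)) Finset.univ.val
      = Multiset.map (fun a => X - C a) (Finset.univ.val.map hA.eigenvalues) := by
    rw [Multiset.map_map]; rfl
  rw [this]
  exact roots_multiset_prod_X_sub_C _


lemma quad_eq_sum (M : Matrix (Fin n) (Fin n) ℝ) (z : EuclideanSpace ℝ (Fin n)) :
    ⟪z, Matrix.toEuclideanLin M z⟫ = ∑ i, ∑ j, M i j * z i * z j := by
  rw [Matrix.toEuclideanLin_apply, PiLp.inner_apply]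
  simp only [RCLike.inner_apply, conj_trivial,
    Matrix.mulVec, dotProduct]
  refine Finset.sum_congr rfl fun i _ => ?_
  rw [Finset.sum_mul]
  exact Finset.sum_congr rfl fun j _ => by ring

lemma eigLin (A : Matrix (Fin n) (Fin n) ℝ) (hA : A.IsHermitian) (j : Fin n) :
    Matrix.toEuclideanLin A (hA.eigenvectorBasis j) = hA.eigenvalues j • hA.eigenvectorBasis j := by
  have h := hA.mulVec_eigenvectorBasis j
  rw [Matrix.toEuclideanLin_apply]
  apply PiLp.ext
  intro i
  have := congrFun h i
  simpa using this

lemma quad_repr (A : Matrix (Fin n) (Fin n) ℝ) (hA : A.IsHermitian) (z : EuclideanSpace ℝ (Fin n)) :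
    ⟪z, Matrix.toEuclideanLin A z⟫
      = ∑ i, hA.eigenvalues i * (hA.eigenvectorBasis.repr z i)^2 := by
  set b := hA.eigenvectorBasis with hb
  have hz : (Matrix.toEuclideanLin A) z = ∑ i, (hA.eigenvalues i * b.repr z i) • b i := by
    conv_lhs => rw [← b.sum_repr z]
    rw [map_sum]
    refine Finset.sum_congr rfl fun i _ => ?_
    rw [_root_.map_smul, eigLin A hA i, smul_smul, mul_comm]
  rw [hz, inner_sum]
  refine Finset.sum_congr rfl fun i _ => ?_
  rw [real_inner_smul_right]
  have : ⟪z, b i⟫ = b.repr z i := by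
    rw [real_inner_comm]
    exact (b.repr_apply_apply z i).symm
  rw [this]; ring

lemma norm_repr (b : OrthonormalBasis (Fin n) ℝ (EuclideanSpace ℝ (Fin n)))
    (z : EuclideanSpace ℝ (Fin n)) : ‖z‖^2 = ∑ i, (b.repr z i)^2 := by
  have h1 : ‖z‖ = ‖b.repr z‖ := (b.repr.norm_map z).symm
  rw [h1, ← real_inner_self_eq_norm_sq, PiLp.inner_apply]
  simp [pow_two]

lemma repr_vanish (b : OrthonormalBasis (Fin n) ℝ (EuclideanSpace ℝ (Fin n))) (S : Finset (Fin n))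
    (z : EuclideanSpace ℝ (Fin n)) (hz : z ∈ Submodule.span ℝ (⇑b '' ↑S)) :
    ∀ i ∉ S, b.repr z i = 0 := by
  intro i hi
  induction hz using Submodule.span_induction with
  | mem x hx =>
      obtain ⟨j, hj, rfl⟩ := hx
      rw [b.repr_self j]
      rw [EuclideanSpace.single_apply]
      simp only [ite_eq_right_iff]
      intro h; exact absurd (h ▸ hj) hi
  | zero => simp
  | add x y _ _ hx hy => rw [map_add]; simp [hx, hy]
  | smul c x _ hx => rw [_root_.map_smul]; simp [hx]

lemma finrank_span_basis_image (b : OrthonormalBasis (Fin n) ℝ (EuclideanSpace ℝ (Fin n)))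
    (S : Finset (Fin n)) :
    Module.finrank ℝ (Submodule.span ℝ (⇑b '' ↑S)) = S.card := by
  have hli : LinearIndependent ℝ (⇑b ∘ (Subtype.val : {x // x ∈ S} → Fin n)) :=
    (b.orthonormal.linearIndependent).comp _ Subtype.val_injective
  have him : Set.range (⇑b ∘ (Subtype.val : {x // x ∈ S} → Fin n)) = ⇑b '' ↑S := by
    rw [Set.range_comp, Subtype.range_coe_subtype]
    rfl
  rw [← him, finrank_span_eq_card hli]
  simp

lemma exists_mem_inf_ne_zero (U W : Submodule ℝ (EuclideanSpace ℝ (Fin n)))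
    (h : n < Module.finrank ℝ U + Module.finrank ℝ W) :
    ∃ z : EuclideanSpace ℝ (Fin n), z ≠ 0 ∧ z ∈ U ∧ z ∈ W := by
  have htot : Module.finrank ℝ (EuclideanSpace ℝ (Fin n)) = n := by simp
  have hsum := Submodule.finrank_sup_add_finrank_inf_eq U W
  have hle : Module.finrank ℝ ↥(U ⊔ W) ≤ n := by
    have := Submodule.finrank_le (U ⊔ W)
    omega
  have hpos : 0 < Module.finrank ℝ ↥(U ⊓ W) := by omega
  obtain ⟨⟨z, hzUW⟩, hz0⟩ := Module.finrank_pos_iff_exists_ne_zero.mp hpos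
  refine ⟨z, ?_, hzUW.1, hzUW.2⟩
  intro h0
  exact hz0 (by simp [h0])

lemma key_ineq (A B : Matrix (Fin n) (Fin n) ℝ) (hA : A.IsHermitian) (hB : B.IsHermitian)
    (y : EuclideanSpace ℝ (Fin n))
    (hcomp : ∀ z : EuclideanSpace ℝ (Fin n), ⟪z, y⟫ = 0 →
      ⟪z, Matrix.toEuclideanLin B z⟫ ≤ ⟪z, Matrix.toEuclideanLin A z⟫)
    (a c : ℝ) (SA SB : Finset (Fin n))
    (hSA : ∀ i ∈ SA, hA.eigenvalues i ≤ a) (hSB : ∀ i ∈ SB, c ≤ hB.eigenvalues i)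
    (hcard : n + 2 ≤ SA.card + SB.card) : c ≤ a := by
  classical
  set bA := hA.eigenvectorBasis
  set bB := hB.eigenvectorBasis
  set U := Submodule.span ℝ (⇑bA '' ↑SA) with hU
  set Wb := Submodule.span ℝ (⇑bB '' ↑SB) with hWb
  set Y := (ℝ ∙ y)ᗮ with hY
  have hrU : Module.finrank ℝ U = SA.card := finrank_span_basis_image bA SA
  have hrWb : Module.finrank ℝ Wb = SB.card := finrank_span_basis_image bB SB
  have htot : Module.finrank ℝ (EuclideanSpace ℝ (Fin n)) = n := by simp
  have hrY : n ≤ Module.finrank ℝ Y + 1 := by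
    have h1 := Submodule.finrank_add_finrank_orthogonal (K := ℝ ∙ y)
    rw [← hY, htot] at h1
    have h2 : Module.finrank ℝ (ℝ ∙ y) ≤ 1 := by
      by_cases hy : y = 0
      · rw [hy, Submodule.span_zero_singleton]
        simp
      · rw [finrank_span_singleton hy]
    omega
  have hrW : SB.card ≤ Module.finrank ℝ ↥(Wb ⊓ Y) + 1 := by
    have h1 := Submodule.finrank_sup_add_finrank_inf_eq Wb Y
    have h2 : Module.finrank ℝ ↥(Wb ⊔ Y) ≤ n := by
      have := Submodule.finrank_le (Wb ⊔ Y); omega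
    omega
  obtain ⟨z, hz0, hzU, hzW⟩ := exists_mem_inf_ne_zero U (Wb ⊓ Y)
    (by have : SB.card ≤ n := by
          have := Submodule.finrank_le Wb; omega
        omega)
  have hzWb : z ∈ Wb := hzW.1
  have hzY : z ∈ Y := hzW.2
  have hzy : ⟪z, y⟫ = 0 := by
    have h := Submodule.inner_right_of_mem_orthogonal (Submodule.mem_span_singleton_self y) hzY
    rw [real_inner_comm]; exact h
  have hnz : (0:ℝ) < ‖z‖^2 := pow_pos (norm_pos_iff.mpr hz0) 2
  have hlow : c * ‖z‖^2 ≤ ⟪z, Matrix.toEuclideanLin B z⟫ := by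
    rw [quad_repr B hB z, norm_repr bB z, Finset.mul_sum]
    refine Finset.sum_le_sum fun i _ => ?_
    by_cases hi : i ∈ SB
    · exact mul_le_mul_of_nonneg_right (hSB i hi) (sq_nonneg _)
    · rw [repr_vanish bB SB z hzWb i hi]; simp
  have hhigh : ⟪z, Matrix.toEuclideanLin A z⟫ ≤ a * ‖z‖^2 := by
    rw [quad_repr A hA z, norm_repr bA z, Finset.mul_sum]
    refine Finset.sum_le_sum fun i _ => ?_
    by_cases hi : i ∈ SA
    · exact mul_le_mul_of_nonneg_right (hSA i hi) (sq_nonneg _)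
    · rw [repr_vanish bA SA z hzU i hi]; simp
  have hfin := hlow.trans ((hcomp z hzy).trans hhigh)
  rw [mul_comm c, mul_comm a] at hfin
  exact (mul_le_mul_iff_right₀ hnz).mp hfin


lemma filter_card_eq (μ : Fin n → ℝ) (lam : ℕ → ℝ)
    (hmul : Finset.univ.val.map μ = (Multiset.range n).map lam) (p : ℝ → Prop) [DecidablePred p] :
    (Finset.univ.filter (fun i : Fin n => p (μ i))).card
      = ((Finset.range n).filter (fun j => p (lam j))).card := by
  have h1 : (Finset.univ.filter (fun i : Fin n => p (μ i))).card
      = Multiset.countP p (Finset.univ.val.map μ) := by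
    rw [Multiset.countP_map]
    rfl
  have h2 : ((Finset.range n).filter (fun j => p (lam j))).card
      = Multiset.countP p ((Multiset.range n).map lam) := by
    rw [Multiset.countP_map]
    rfl
  rw [h1, h2, hmul]

lemma count_ge (μ : Fin n → ℝ) (lam : ℕ → ℝ)
    (hmul : Finset.univ.val.map μ = (Multiset.range n).map lam)
    (hmono : Antitone lam) (k : ℕ) (hk : k < n) :
    k + 1 ≤ (Finset.univ.filter (fun i : Fin n => lam k ≤ μ i)).card := by
  classical
  rw [filter_card_eq μ lam hmul (fun x => lam k ≤ x)]
  have hsub : Finset.range (k+1) ⊆ (Finset.range n).filter (fun j => lam k ≤ lam j) := by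
    intro j hj
    rw [Finset.mem_range] at hj
    rw [Finset.mem_filter, Finset.mem_range]
    exact ⟨lt_of_lt_of_le hj hk, hmono (Nat.lt_succ_iff.mp hj)⟩
  simpa using Finset.card_le_card hsub

lemma count_le (μ : Fin n → ℝ) (lam : ℕ → ℝ)
    (hmul : Finset.univ.val.map μ = (Multiset.range n).map lam)
    (hmono : Antitone lam) (k : ℕ) (hk : k < n) :
    n - k ≤ (Finset.univ.filter (fun i : Fin n => μ i ≤ lam k)).card := by
  classical
  rw [filter_card_eq μ lam hmul (fun x => x ≤ lam k)]
  have hsub : Finset.Ico k n ⊆ (Finset.range n).filter (fun j => lam j ≤ lam k) := by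
    intro j hj
    rw [Finset.mem_Ico] at hj
    rw [Finset.mem_filter, Finset.mem_range]
    exact ⟨hj.2, hmono hj.1⟩
  simpa using Finset.card_le_card hsub

lemma eig_mem (μ : Fin n → ℝ) (lam : ℕ → ℝ)
    (hmul : Finset.univ.val.map μ = (Multiset.range n).map lam) (i : Fin n) :
    ∃ k < n, μ i = lam k := by
  have : μ i ∈ (Multiset.range n).map lam := by
    rw [← hmul]
    exact Multiset.mem_map_of_mem μ (Finset.mem_univ i)
  obtain ⟨k, hk, he⟩ := Multiset.mem_map.mp this
  exact ⟨k, Multiset.mem_range.mp hk, he.symm⟩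

lemma val_mem (μ : Fin n → ℝ) (lam : ℕ → ℝ)
    (hmul : Finset.univ.val.map μ = (Multiset.range n).map lam) (k : ℕ) (hk : k < n) :
    ∃ i : Fin n, lam k = μ i := by
  have : lam k ∈ Finset.univ.val.map μ := by
    rw [hmul]
    exact Multiset.mem_map_of_mem lam (Multiset.mem_range.mpr hk)
  obtain ⟨i, _, he⟩ := Multiset.mem_map.mp this
  exact ⟨i, he.symm⟩



lemma adjMat_one {V : Type*} [Fintype V] {G : SimpleGraph V} {a b : V} (h : G.Adj a b) :
    adjMat G a b = 1 := by
  simp [adjMat, SimpleGraph.adjMatrix_apply, h]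

lemma adjMat_zero {V : Type*} [Fintype V] {G : SimpleGraph V} {a b : V} (h : ¬ G.Adj a b) :
    adjMat G a b = 0 := by
  simp [adjMat, SimpleGraph.adjMatrix_apply, h]

lemma adjMat_cases {V : Type*} [Fintype V] (G : SimpleGraph V) (a b : V) :
    adjMat G a b = 1 ∧ G.Adj a b ∨ adjMat G a b = 0 ∧ ¬ G.Adj a b := by
  by_cases h : G.Adj a b
  · exact Or.inl ⟨adjMat_one h, h⟩
  · exact Or.inr ⟨adjMat_zero h, h⟩

lemma adjMat_herm {V : Type*} [Fintype V] (G : SimpleGraph V) : (adjMat G).IsHermitian := by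
  unfold Matrix.IsHermitian
  ext a b
  simp only [Matrix.conjTranspose_apply, star_trivial]
  by_cases h : G.Adj a b
  · rw [adjMat_one h, adjMat_one h.symm]
  · rw [adjMat_zero h, adjMat_zero (fun hc => h hc.symm)]

lemma adjMat_nonneg {V : Type*} [Fintype V] (G : SimpleGraph V) (a b : V) : 0 ≤ adjMat G a b := by
  rcases adjMat_cases G a b with ⟨h, _⟩ | ⟨h, _⟩ <;> rw [h] <;> norm_num

lemma adjMat_le (G H : SimpleGraph (Fin n)) (e : Sym2 (Fin n)) (hH : H = G.deleteEdges {e})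
    (a b : Fin n) : adjMat H a b ≤ adjMat G a b := by
  subst hH
  by_cases h : (G.deleteEdges {e}).Adj a b
  · have hg : G.Adj a b := (SimpleGraph.deleteEdges_adj.mp h).1
    rw [adjMat_one h, adjMat_one hg]
  · rw [adjMat_zero h]
    exact adjMat_nonneg G a b





lemma adjMat_diff (G : SimpleGraph (Fin n)) (i j : Fin n) (he : G.Adj i j) (a b : Fin n) :
    adjMat G a b - adjMat (G.deleteEdges {s(i,j)}) a b
      = if (a = i ∧ b = j) ∨ (a = j ∧ b = i) then 1 else 0 := by
  classical
  by_cases hs : s(a,b) = s(i,j)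
  · have hcase : (a = i ∧ b = j) ∨ (a = j ∧ b = i) := Sym2.eq_iff.mp hs
    have hG : G.Adj a b := by
      rcases hcase with ⟨rfl, rfl⟩ | ⟨rfl, rfl⟩
      · exact he
      · exact he.symm
    have hH : ¬ (G.deleteEdges {s(i,j)}).Adj a b := by
      rw [SimpleGraph.deleteEdges_adj]
      push_neg
      intro _
      simpa using hs
    rw [adjMat_one hG, adjMat_zero hH, if_pos hcase]
    norm_num
  · have hcase : ¬ ((a = i ∧ b = j) ∨ (a = j ∧ b = i)) := fun hc => hs (Sym2.eq_iff.mpr hc)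
    rw [if_neg hcase]
    by_cases hG : G.Adj a b
    · have hH : (G.deleteEdges {s(i,j)}).Adj a b := by
        rw [SimpleGraph.deleteEdges_adj]
        exact ⟨hG, by simpa using hs⟩
      rw [adjMat_one hG, adjMat_one hH]; ring
    · have hH : ¬ (G.deleteEdges {s(i,j)}).Adj a b := by
        rw [SimpleGraph.deleteEdges_adj]
        tauto
      rw [adjMat_zero hG, adjMat_zero hH]; ring

lemma double_sum_indicator (i j : Fin n) (hij : i ≠ j) (z : EuclideanSpace ℝ (Fin n)) :
    ∑ a, ∑ b, (if (a = i ∧ b = j) ∨ (a = j ∧ b = i) then (1:ℝ) else 0) * z a * z b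
      = 2 * z i * z j := by
  classical
  have hinner : ∀ a : Fin n,
      ∑ b, (if (a = i ∧ b = j) ∨ (a = j ∧ b = i) then (1:ℝ) else 0) * z a * z b
        = (if a = i then z a * z j else 0) + (if a = j then z a * z i else 0) := by
    intro a
    by_cases hai : a = i
    · subst hai
      rw [if_pos rfl, if_neg hij]
      rw [Finset.sum_congr rfl (fun b _ => ?_), Finset.sum_ite_eq' Finset.univ j (fun b => z a * z b)]
      · simp
      · by_cases hbj : b = j
        · subst hbj; rw [if_pos (Or.inl ⟨rfl, rfl⟩), if_pos rfl]; ring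
        · rw [if_neg, if_neg hbj]
          · ring
          · rintro (⟨_, h⟩ | ⟨h, _⟩)
            · exact hbj h
            · exact hij h
    · by_cases haj : a = j
      · subst haj
        rw [if_neg hai, if_pos rfl]
        rw [Finset.sum_congr rfl (fun b _ => ?_), Finset.sum_ite_eq' Finset.univ i (fun b => z a * z b)]
        · simp
        · by_cases hbi : b = i
          · subst hbi; rw [if_pos (Or.inr ⟨rfl, rfl⟩), if_pos rfl]; ring
          · rw [if_neg, if_neg hbi]
            · ring
            · rintro (⟨h, _⟩ | ⟨_, h⟩)
              · exact hai h
              · exact hbi h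
      · rw [if_neg hai, if_neg haj]
        rw [Finset.sum_eq_zero (fun b _ => ?_)]
        · norm_num
        · rw [if_neg, zero_mul, zero_mul]
          rintro (⟨h, _⟩ | ⟨h, _⟩)
          · exact hai h
          · exact haj h
  rw [Finset.sum_congr rfl (fun a _ => hinner a)]
  rw [Finset.sum_add_distrib, Finset.sum_ite_eq' Finset.univ i (fun a => z a * z j),
    Finset.sum_ite_eq' Finset.univ j (fun a => z a * z i)]
  simp
  ring






lemma quad_upper (A : Matrix (Fin n) (Fin n) ℝ) (hA : A.IsHermitian) (a : ℝ)
    (ha : ∀ i, hA.eigenvalues i ≤ a) (z : EuclideanSpace ℝ (Fin n)) :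
    ⟪z, Matrix.toEuclideanLin A z⟫ ≤ a * ‖z‖^2 := by
  rw [quad_repr A hA z, norm_repr hA.eigenvectorBasis z, Finset.mul_sum]
  exact Finset.sum_le_sum fun i _ => mul_le_mul_of_nonneg_right (ha i) (sq_nonneg _)

lemma perron (A B : Matrix (Fin n) (Fin n) ℝ) (hA : A.IsHermitian) (hB : B.IsHermitian)
    (hBnn : ∀ a b, 0 ≤ B a b) (hBA : ∀ a b, B a b ≤ A a b) (a : ℝ)
    (ha : ∀ i, hA.eigenvalues i ≤ a) (i : Fin n) : hB.eigenvalues i ≤ a := by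
  set v : EuclideanSpace ℝ (Fin n) := hB.eigenvectorBasis i with hv
  have hv1 : ‖v‖ = 1 := hB.eigenvectorBasis.orthonormal.1 i
  have heig : hB.eigenvalues i = ⟪v, Matrix.toEuclideanLin B v⟫ := by
    rw [eigLin B hB i, real_inner_smul_right, real_inner_self_eq_norm_sq]
    rw [hv1]
    norm_num
  set w : EuclideanSpace ℝ (Fin n) := (WithLp.equiv 2 (Fin n → ℝ)).symm (fun idx => |v idx|) with hw
  have hwa : ∀ idx, w idx = |v idx| := fun idx => rfl
  have h1 : ⟪v, Matrix.toEuclideanLin B v⟫ ≤ ⟪w, Matrix.toEuclideanLin A w⟫ := by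
    rw [quad_eq_sum, quad_eq_sum]
    refine Finset.sum_le_sum fun x _ => Finset.sum_le_sum fun y _ => ?_
    rw [hwa x, hwa y]
    have step1 : B x y * v x * v y ≤ B x y * (|v x| * |v y|) := by
      rw [mul_assoc]
      refine mul_le_mul_of_nonneg_left ?_ (hBnn x y)
      calc v x * v y ≤ |v x * v y| := le_abs_self _
        _ = |v x| * |v y| := abs_mul _ _
    have step2 : B x y * (|v x| * |v y|) ≤ A x y * |v x| * |v y| := by
      rw [← mul_assoc]
      refine mul_le_mul_of_nonneg_right ?_ (abs_nonneg _)
      exact mul_le_mul_of_nonneg_right (hBA x y) (abs_nonneg _)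
    calc B x y * v x * v y ≤ B x y * (|v x| * |v y|) := step1
      _ ≤ A x y * |v x| * |v y| := step2
  have h2 : ⟪w, Matrix.toEuclideanLin A w⟫ ≤ a * ‖w‖^2 := quad_upper A hA a ha w
  have h3 : ‖w‖^2 = ‖v‖^2 := by
    rw [← real_inner_self_eq_norm_sq, ← real_inner_self_eq_norm_sq, PiLp.inner_apply,
      PiLp.inner_apply]
    refine Finset.sum_congr rfl fun x _ => ?_
    simp only [RCLike.inner_apply, conj_trivial, hwa x]
    exact abs_mul_abs_self _
  rw [heig]
  calc ⟪v, Matrix.toEuclideanLin B v⟫ ≤ a * ‖w‖^2 := h1.trans h2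
    _ = a * ‖v‖^2 := by rw [h3]
    _ = a := by rw [hv1]; norm_num

end AuxLemmas

open Finset
open scoped RealInnerProductSpace

/-- Let `G` be a simple graph on `n` vertices, `e ∈ E(G)`, `H = G - e`,
with `lam` and `θ` the nonincreasing lists of eigenvalues of `A(G)` and `A(H)` (0-indexed).
Suppose `H` has exactly `r ≥ 2` positive eigenvalues. Then for every `2 ≤ t ≤ r`,
`λ₁ + Σ_{k=2}^t max{λ_k, 0} ≥ θ₁ + Σ_{k=3}^t θ_k`. -/
theorem majorization_sum_positive_part {n : ℕ}
    (G H : SimpleGraph (Fin n)) (e : Sym2 (Fin n)) (he : e ∈ G.edgeSet)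
    (hH : H = G.deleteEdges {e})
    (lam θ : ℕ → ℝ) (hlam_mono : Antitone lam) (hθ_mono : Antitone θ)
    (hlam : (adjMat G).charpoly.roots = (Multiset.range n).map lam)
    (hθ : (adjMat H).charpoly.roots = (Multiset.range n).map θ)
    (r : ℕ) (hr : 2 ≤ r)
    (hrcard : ((Finset.range n).filter (fun i => 0 < θ i)).card = r) :
    ∀ t : ℕ, 2 ≤ t → t ≤ r →
      lam 0 + ∑ k ∈ Finset.Ico 1 t, max (lam k) 0 ≥ θ 0 + ∑ k ∈ Finset.Ico 2 t, θ k := by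
  intro t ht2 htr
  subst hH
  revert hθ he
  induction e using Sym2.ind with
  | _ i j =>
    intro he hθ
    classical
    have hadj : G.Adj i j := (SimpleGraph.mem_edgeSet G).mp he
    have hij : i ≠ j := G.ne_of_adj hadj
    have hA := adjMat_herm G
    have hB := adjMat_herm (G.deleteEdges {s(i,j)})
    have hmulA : Finset.univ.val.map hA.eigenvalues = (Multiset.range n).map lam :=
      (aux_roots_eq_s10 _ hA).symm.trans hlam
    have hmulB : Finset.univ.val.map hB.eigenvalues = (Multiset.range n).map θ :=
      (aux_roots_eq_s10 _ hB).symm.trans hθ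
    have hrn : r ≤ n := by
      have h := Finset.card_filter_le (Finset.range n) (fun i => 0 < θ i)
      rwa [hrcard, Finset.card_range] at h
    set y : EuclideanSpace ℝ (Fin n) :=
      EuclideanSpace.single i (1:ℝ) - EuclideanSpace.single j (1:ℝ) with hy
    have hcomp : ∀ z : EuclideanSpace ℝ (Fin n), ⟪z, y⟫ = 0 →
        ⟪z, Matrix.toEuclideanLin (adjMat (G.deleteEdges {s(i,j)})) z⟫
          ≤ ⟪z, Matrix.toEuclideanLin (adjMat G) z⟫ := by
      intro z hz
      have hzij : z i = z j := by
        rw [hy, inner_sub_right] at hz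
        simp only [EuclideanSpace.inner_single_right, conj_trivial, one_mul] at hz
        linarith
      rw [quad_eq_sum, quad_eq_sum]
      have hdiff : (∑ a, ∑ b, (adjMat G) a b * z a * z b)
          - ∑ a, ∑ b, (adjMat (G.deleteEdges {s(i,j)})) a b * z a * z b
          = 2 * z i * z j := by
        rw [← Finset.sum_sub_distrib]
        have hrow : ∀ a, ((∑ b, (adjMat G) a b * z a * z b)
            - ∑ b, (adjMat (G.deleteEdges {s(i,j)})) a b * z a * z b)
            = ∑ b, (if (a = i ∧ b = j) ∨ (a = j ∧ b = i) then (1:ℝ) else 0) * z a * z b := by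
          intro a
          rw [← Finset.sum_sub_distrib]
          refine Finset.sum_congr rfl fun b _ => ?_
          rw [← adjMat_diff G i j hadj a b]
          ring
        rw [Finset.sum_congr rfl (fun a _ => hrow a)]
        exact double_sum_indicator i j hij z
      have h2 : 2 * z i * z j = 2 * (z i * z i) := by rw [← hzij]; ring
      rw [h2] at hdiff
      nlinarith [mul_self_nonneg (z i), hdiff]
    have hinter : ∀ k : ℕ, 1 ≤ k → k < n → θ k ≤ lam (k-1) := by
      intro k hk1 hkn
      refine key_ineq (adjMat G) (adjMat (G.deleteEdges {s(i,j)})) hA hB y hcomp (lam (k-1)) (θ k)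
        (Finset.univ.filter (fun x => hA.eigenvalues x ≤ lam (k-1)))
        (Finset.univ.filter (fun x => θ k ≤ hB.eigenvalues x))
        (fun x hx => (Finset.mem_filter.mp hx).2)
        (fun x hx => (Finset.mem_filter.mp hx).2) ?_
      have c1 := count_le hA.eigenvalues lam hmulA hlam_mono (k-1) (by omega)
      have c2 := count_ge hB.eigenvalues θ hmulB hθ_mono k hkn
      omega
    have htop : θ 0 ≤ lam 0 := by
      have hn0 : 0 < n := by omega
      obtain ⟨i0, hi0⟩ := val_mem hB.eigenvalues θ hmulB 0 hn0
      have ha : ∀ x, hA.eigenvalues x ≤ lam 0 := by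
        intro x
        obtain ⟨k, _, hke⟩ := eig_mem hA.eigenvalues lam hmulA x
        rw [hke]
        exact hlam_mono (Nat.zero_le k)
      rw [hi0]
      exact perron (adjMat G) (adjMat (G.deleteEdges {s(i,j)})) hA hB
        (adjMat_nonneg _) (adjMat_le G (G.deleteEdges {s(i,j)}) s(i,j) rfl) (lam 0) ha i0
    have hterm : ∀ k ∈ Finset.Ico 2 t, θ k ≤ max (lam (k-1)) 0 := by
      intro k hk
      rw [Finset.mem_Ico] at hk
      exact (hinter k (by omega) (by omega)).trans (le_max_left _ _)
    have hs1 : ∑ k ∈ Finset.Ico 2 t, θ k ≤ ∑ k ∈ Finset.Ico 2 t, max (lam (k-1)) 0 :=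
      Finset.sum_le_sum hterm
    have hs2 : ∑ k ∈ Finset.Ico 2 t, max (lam (k-1)) 0
        = ∑ k ∈ Finset.Ico 1 (t-1), max (lam k) 0 := by
      rw [Finset.sum_Ico_eq_sum_range, Finset.sum_Ico_eq_sum_range]
      have h22 : t - 1 - 1 = t - 2 := by omega
      rw [h22]
      refine Finset.sum_congr rfl fun k _ => ?_
      congr 2
      omega
    have hs3 : ∑ k ∈ Finset.Ico 1 (t-1), max (lam k) 0 ≤ ∑ k ∈ Finset.Ico 1 t, max (lam k) 0 := by
      refine Finset.sum_le_sum_of_subset_of_nonneg (Finset.Ico_subset_Ico le_rfl (by omega)) ?_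
      intro k _ _
      exact le_max_right _ _
    linarith [hs1, hs2, hs3, htop]
end
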